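/- arXiv:2407.05110 — 3 statements merged into one kernel-verified Lean document; each statement's English description precedes it below -/
import Mathlib

section
/- For matrices A, B in S^n_{++} (symmetric positive definite n×n real matrices) whose Frobenius norms are at most K, one has -⟨A^{-1} - B^{-1}, A - B⟩ ≥ K^{-2} ‖A - B‖², where ⟨X,Y⟩ = tr(Xᵀ Y) and ‖·‖ is the Frobenius norm. -/
open Matrix

/-- Trace inner product ⟨A,B⟩ = tr(Aᵀ B). -/
noncomputable def tInner {n : ℕ} (A B : Matrix (Fin n) (Fin n) ℝ) : ℝ :=
  Matrix.trace (Aᵀ * B)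

/-- Frobenius norm. -/
noncomputable def frob {n : ℕ} (A : Matrix (Fin n) (Fin n) ℝ) : ℝ :=
  Real.sqrt (tInner A A)

namespace StrongMonoAux

variable {n : ℕ}

lemma herm_tr {A : Matrix (Fin n) (Fin n) ℝ} (h : A.IsHermitian) : Aᵀ = A := by
  rw [← conjTranspose_eq_transpose_of_trivial]; exact h

lemma psd_trace_nonneg {M : Matrix (Fin n) (Fin n) ℝ} (hM : M.PosSemidef) :
    0 ≤ M.trace := by
  rw [Matrix.trace]
  refine Finset.sum_nonneg fun i _ => ?_
  have := hM.dotProduct_mulVec_nonneg (Pi.single i 1)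
  simpa [Matrix.mulVec_single, dotProduct, Pi.single_apply] using this

open scoped MatrixOrder in
lemma psd_trace_mul_nonneg {P Q : Matrix (Fin n) (Fin n) ℝ}
    (hP : P.PosSemidef) (hQ : Q.PosSemidef) : 0 ≤ (P * Q).trace := by
  have hs : CFC.sqrt Q * CFC.sqrt Q = Q := CFC.sqrt_mul_sqrt_self Q hQ.nonneg
  have hherm : (CFC.sqrt Q)ᴴ = CFC.sqrt Q := (CFC.sqrt_nonneg Q).posSemidef.isHermitian
  have key : (P * Q).trace = ((CFC.sqrt Q)ᴴ * P * CFC.sqrt Q).trace := by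
    conv_lhs => rw [← hs]
    rw [hherm, ← Matrix.mul_assoc, Matrix.trace_mul_comm, ← Matrix.mul_assoc]
  rw [key]
  exact psd_trace_nonneg (hP.conjTranspose_mul_mul_same _)

lemma psd_cs {M : Matrix (Fin n) (Fin n) ℝ} (hM : M.PosSemidef) (u v : Fin n → ℝ) :
    (u ⬝ᵥ M *ᵥ v) ^ 2 ≤ (u ⬝ᵥ M *ᵥ u) * (v ⬝ᵥ M *ᵥ v) := by
  have hsym : ∀ a b : Fin n → ℝ, a ⬝ᵥ M *ᵥ b = b ⬝ᵥ M *ᵥ a := by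
    intro a b
    rw [Matrix.dotProduct_mulVec, ← Matrix.mulVec_transpose, herm_tr hM.1,
      dotProduct_comm]
  have hq : ∀ t : ℝ, 0 ≤ (v ⬝ᵥ M *ᵥ v) * (t * t) + (2 * (u ⬝ᵥ M *ᵥ v)) * t
      + (u ⬝ᵥ M *ᵥ u) := by
    intro t
    have h0 := hM.dotProduct_mulVec_nonneg (u + t • v)
    have hexp : (u + t • v) ⬝ᵥ M *ᵥ (u + t • v)
        = (v ⬝ᵥ M *ᵥ v) * (t * t) + (2 * (u ⬝ᵥ M *ᵥ v)) * t + (u ⬝ᵥ M *ᵥ u) := by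
      rw [Matrix.mulVec_add, Matrix.mulVec_smul]
      simp only [add_dotProduct, dotProduct_add, smul_dotProduct,
        dotProduct_smul, smul_eq_mul]
      rw [hsym v u]
      ring
    simpa [hexp] using h0
  have hd := discrim_le_zero hq
  rw [discrim] at hd
  nlinarith [hd]

lemma tInner_self_eq (A : Matrix (Fin n) (Fin n) ℝ) :
    tInner A A = ∑ p : Fin n × Fin n, (A p.1 p.2) ^ 2 := by
  have hd : ∀ i, (Aᵀ * A).diag i = ∑ j, A j i ^ 2 := fun i => by
    simp [Matrix.diag, Matrix.mul_apply, sq]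
  simp only [tInner, Matrix.trace, hd]
  rw [Finset.sum_comm]
  exact (Fintype.sum_prod_type (fun p : Fin n × Fin n => A p.1 p.2 ^ 2)).symm

lemma tInner_self_nonneg (A : Matrix (Fin n) (Fin n) ℝ) : 0 ≤ tInner A A := by
  rw [tInner_self_eq]; positivity

lemma frob_sq (A : Matrix (Fin n) (Fin n) ℝ) : frob A ^ 2 = tInner A A :=
  Real.sq_sqrt (tInner_self_nonneg A)

lemma dot_self_nonneg (x : Fin n → ℝ) : 0 ≤ x ⬝ᵥ x :=
  Finset.sum_nonneg fun i _ => mul_self_nonneg _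

lemma quad_le (A : Matrix (Fin n) (Fin n) ℝ) (x : Fin n → ℝ) :
    x ⬝ᵥ A *ᵥ x ≤ frob A * (x ⬝ᵥ x) := by
  have h1 : (x ⬝ᵥ A *ᵥ x) ^ 2 ≤ tInner A A * (x ⬝ᵥ x) ^ 2 := by
    have hcs := Finset.sum_mul_sq_le_sq_mul_sq Finset.univ
      (fun p : Fin n × Fin n => A p.1 p.2) (fun p : Fin n × Fin n => x p.1 * x p.2)
    have e1 : ∑ p : Fin n × Fin n, A p.1 p.2 * (x p.1 * x p.2) = x ⬝ᵥ A *ᵥ x := by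
      rw [Fintype.sum_prod_type]
      simp only [dotProduct, Matrix.mulVec, Finset.mul_sum]
      exact Finset.sum_congr rfl fun i _ => Finset.sum_congr rfl fun j _ => by ring
    have e2 : ∑ p : Fin n × Fin n, (A p.1 p.2) ^ 2 = tInner A A := (tInner_self_eq A).symm
    have e3 : ∑ p : Fin n × Fin n, (x p.1 * x p.2) ^ 2 = (x ⬝ᵥ x) ^ 2 := by
      rw [Fintype.sum_prod_type, dotProduct, sq, Finset.sum_mul_sum]
      exact Finset.sum_congr rfl fun i _ => Finset.sum_congr rfl fun j _ => by
        simp [sq]; ring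
    rw [e1, e2, e3] at hcs
    exact hcs
  have h2 : x ⬝ᵥ A *ᵥ x ≤ |x ⬝ᵥ A *ᵥ x| := le_abs_self _
  have h3 : |x ⬝ᵥ A *ᵥ x| = Real.sqrt ((x ⬝ᵥ A *ᵥ x) ^ 2) := (Real.sqrt_sq_eq_abs _).symm
  calc x ⬝ᵥ A *ᵥ x ≤ Real.sqrt ((x ⬝ᵥ A *ᵥ x) ^ 2) := h3 ▸ h2
    _ ≤ Real.sqrt (tInner A A * (x ⬝ᵥ x) ^ 2) := Real.sqrt_le_sqrt h1
    _ = frob A * (x ⬝ᵥ x) := by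
        rw [Real.sqrt_mul (tInner_self_nonneg A), Real.sqrt_sq (dot_self_nonneg x)]
        rfl

lemma inv_shift_psd {K : ℝ} {A : Matrix (Fin n) (Fin n) ℝ} (hA : A.PosDef) (hK : 0 < K)
    (h : ∀ x, x ⬝ᵥ A *ᵥ x ≤ K * (x ⬝ᵥ x)) :
    (A⁻¹ - K⁻¹ • (1 : Matrix (Fin n) (Fin n) ℝ)).PosSemidef := by
  have hAinv : A⁻¹.PosDef := hA.inv
  refine Matrix.PosSemidef.of_dotProduct_mulVec_nonneg ?_ ?_
  · show _ = _
    rw [Matrix.conjTranspose_sub, hAinv.isHermitian.eq, Matrix.conjTranspose_smul,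
      Matrix.conjTranspose_one, star_trivial]
  · intro y
    have hAy : A *ᵥ (A⁻¹ *ᵥ y) = y := by
      rw [Matrix.mulVec_mulVec, Matrix.mul_nonsing_inv _ (isUnit_iff_ne_zero.mpr hA.det_pos.ne'),
        Matrix.one_mulVec]
    set w := A⁻¹ *ᵥ y with hw
    have hsymA : ∀ a b : Fin n → ℝ, a ⬝ᵥ A *ᵥ b = b ⬝ᵥ A *ᵥ a := by
      intro a b
      rw [Matrix.dotProduct_mulVec, ← Matrix.mulVec_transpose, herm_tr hA.isHermitian,
        dotProduct_comm]
    have e1 : w ⬝ᵥ A *ᵥ y = y ⬝ᵥ y := by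
      rw [hsymA, hAy]
    have e2 : w ⬝ᵥ A *ᵥ w = y ⬝ᵥ A⁻¹ *ᵥ y := by
      rw [hsymA, hAy, dotProduct_comm]
    have hcs := psd_cs hA.posSemidef w y
    rw [e1, e2] at hcs
    have hinv_nonneg : 0 ≤ y ⬝ᵥ A⁻¹ *ᵥ y := by
      simpa using hAinv.posSemidef.dotProduct_mulVec_nonneg y
    have hyy : 0 ≤ y ⬝ᵥ y := dot_self_nonneg y
    have hyA := h y
    have key : K⁻¹ * (y ⬝ᵥ y) ≤ y ⬝ᵥ A⁻¹ *ᵥ y := by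
      rcases eq_or_lt_of_le hyy with h0 | h0
      · rw [← h0]; simpa using hinv_nonneg
      · rw [inv_mul_le_iff₀ hK]
        nlinarith
    have expand : y ⬝ᵥ (A⁻¹ - K⁻¹ • (1 : Matrix (Fin n) (Fin n) ℝ)) *ᵥ y
        = y ⬝ᵥ A⁻¹ *ᵥ y - K⁻¹ * (y ⬝ᵥ y) := by
      rw [Matrix.sub_mulVec, dotProduct_sub, Matrix.smul_mulVec,
        Matrix.one_mulVec, dotProduct_smul, smul_eq_mul]
    simp only [star_trivial, expand]
    linarith

end StrongMonoAux

open StrongMonoAux in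
/-- On the set of symmetric positive definite matrices with Frobenius norm at most `K`,
the map `S ↦ -S⁻¹` is strongly monotone with modulus `K⁻²`. -/
theorem stmt0 {n : ℕ} (K : ℝ) (A B : Matrix (Fin n) (Fin n) ℝ)
    (hA : A.PosDef) (hB : B.PosDef) (hAK : frob A ≤ K) (hBK : frob B ≤ K) :
    -(tInner (A⁻¹ - B⁻¹) (A - B)) ≥ (K ^ 2)⁻¹ * frob (A - B) ^ 2 := by
  obtain rfl | hn := Nat.eq_zero_or_pos n
  · simp [tInner, frob, Matrix.trace]
  -- K is positive
  set i0 : Fin n := ⟨0, hn⟩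
  have hxx : (Pi.single i0 1 : Fin n → ℝ) ⬝ᵥ Pi.single i0 1 = 1 := by
    simp [dotProduct, Pi.single_apply]
  have hxAx : (Pi.single i0 1 : Fin n → ℝ) ⬝ᵥ A *ᵥ Pi.single i0 1 = A i0 i0 := by
    simp [Matrix.mulVec_single, dotProduct, Pi.single_apply]
  have hA00 : 0 < A i0 i0 := by
    have hne : (Pi.single i0 1 : Fin n → ℝ) ≠ 0 := by
      intro h
      have := congrFun h i0
      simp at this
    have := hA.dotProduct_mulVec_pos (x := Pi.single i0 1) hne
    rw [star_trivial] at this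
    rwa [hxAx] at this
  have hfrob : 0 < frob A := by
    have hq := quad_le A (Pi.single i0 1)
    rw [hxx, hxAx, mul_one] at hq
    linarith
  have hK : 0 < K := lt_of_lt_of_le hfrob hAK
  -- shifted inverses are PSD
  set c : ℝ := K⁻¹ with hc
  have hc0 : 0 ≤ c := by positivity
  set P : Matrix (Fin n) (Fin n) ℝ := A⁻¹ - c • 1 with hPdef
  set Q : Matrix (Fin n) (Fin n) ℝ := B⁻¹ - c • 1 with hQdef
  have hP : P.PosSemidef := inv_shift_psd hA hK fun x =>
    (quad_le A x).trans (mul_le_mul_of_nonneg_right hAK (dot_self_nonneg x))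
  have hQ : Q.PosSemidef := inv_shift_psd hB hK fun x =>
    (quad_le B x).trans (mul_le_mul_of_nonneg_right hBK (dot_self_nonneg x))
  set D : Matrix (Fin n) (Fin n) ℝ := A - B with hDdef
  have hDh : Dᴴ = D := hA.isHermitian.sub hB.isHermitian
  have hDt : Dᵀ = D := herm_tr (hA.isHermitian.sub hB.isHermitian)
  have hXt : (A⁻¹ - B⁻¹)ᵀ = A⁻¹ - B⁻¹ :=
    herm_tr (hA.inv.isHermitian.sub hB.inv.isHermitian)
  have hAdet : IsUnit A.det := isUnit_iff_ne_zero.mpr hA.det_pos.ne'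
  have hBdet : IsUnit B.det := isUnit_iff_ne_zero.mpr hB.det_pos.ne'
  have hkey : A⁻¹ * D * B⁻¹ = B⁻¹ - A⁻¹ := by
    rw [hDdef, Matrix.mul_sub, Matrix.sub_mul, Matrix.nonsing_inv_mul A hAdet,
      Matrix.mul_assoc, Matrix.mul_nonsing_inv B hBdet, Matrix.one_mul, Matrix.mul_one]
  have lhs_eq : -(tInner (A⁻¹ - B⁻¹) D) = Matrix.trace (A⁻¹ * D * B⁻¹ * D) := by
    rw [tInner, hXt, ← Matrix.trace_neg, ← Matrix.neg_mul, neg_sub, ← hkey]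
  -- expansion
  have hAe : A⁻¹ = P + c • 1 := by rw [hPdef]; abel
  have hBe : B⁻¹ = Q + c • 1 := by rw [hQdef]; abel
  have mat_expand : A⁻¹ * D * B⁻¹ * D
      = P * (D * (Q * D)) + c • (P * (D * D)) + c • (D * (Q * D))
        + (c * c) • (D * D) := by
    rw [hAe, hBe]
    simp only [Matrix.add_mul, Matrix.mul_add, Matrix.smul_mul, Matrix.mul_smul,
      Matrix.one_mul, Matrix.mul_one, smul_smul, smul_add, Matrix.mul_assoc]
    abel
  have hDD : (D * D).PosSemidef := by
    have := Matrix.posSemidef_conjTranspose_mul_self D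
    rwa [hDh] at this
  have hDQD : (D * (Q * D)).PosSemidef := by
    have := hQ.conjTranspose_mul_mul_same D
    rwa [hDh, Matrix.mul_assoc] at this
  have t1 : 0 ≤ Matrix.trace (P * (D * (Q * D))) := psd_trace_mul_nonneg hP hDQD
  have t2 : 0 ≤ Matrix.trace (P * (D * D)) := psd_trace_mul_nonneg hP hDD
  have t3 : 0 ≤ Matrix.trace (D * (Q * D)) := psd_trace_nonneg hDQD
  have t4 : Matrix.trace (D * D) = frob D ^ 2 := by
    rw [frob_sq, tInner]
    rw [hDt]
  have final : Matrix.trace (A⁻¹ * D * B⁻¹ * D)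
      = Matrix.trace (P * (D * (Q * D))) + c * Matrix.trace (P * (D * D))
        + c * Matrix.trace (D * (Q * D)) + (c * c) * frob D ^ 2 := by
    rw [mat_expand]
    simp only [Matrix.trace_add, Matrix.trace_smul, smul_eq_mul, t4]
  have hcc : c * c = (K ^ 2)⁻¹ := by
    rw [hc, sq, mul_inv]
  rw [ge_iff_le, lhs_eq, final, hcc]
  have hcmul : 0 ≤ c * Matrix.trace (P * (D * D)) := mul_nonneg hc0 t2
  have hcmul2 : 0 ≤ c * Matrix.trace (D * (Q * D)) := mul_nonneg hc0 t3
  linarith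
end

section
/- Let λ > 0 and Σ ∈ S^n_{+}, and set L(S) := ⟨Σ, S⟩ - log(det S) + λ‖S‖₁ for S ∈ S^n_{++}. If S ∈ S^n_{++} satisfies ‖S‖₁ > K for some K > n/λ, then S is not a minimizer of L: there exists ε ∈ (0,1) with L((1-ε)S) < L(S). -/
open Matrix

/-- Entrywise 1-norm of a matrix. -/
noncomputable def norm1 {n : ℕ} (A : Matrix (Fin n) (Fin n) ℝ) : ℝ :=
  ∑ i, ∑ j, |A i j|

/-- The objective `L(S) = ⟨Σ,S⟩ - log det S + λ‖S‖₁`. -/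
noncomputable def Lfun {n : ℕ} (lam : ℝ) (Sig S : Matrix (Fin n) (Fin n) ℝ) : ℝ :=
  tInner Sig S - Real.log S.det + lam * norm1 S

lemma psd_trace_nonneg {m : ℕ} {M : Matrix (Fin m) (Fin m) ℝ} (hM : M.PosSemidef) :
    0 ≤ M.trace := by
  rw [Matrix.trace]
  apply Finset.sum_nonneg
  intro i _
  have := hM.diag_nonneg (i := i)
  simpa [Matrix.diag] using this

lemma tInner_nonneg {m : ℕ} {A B : Matrix (Fin m) (Fin m) ℝ}
    (hA : A.PosSemidef) (hB : B.PosSemidef) : 0 ≤ tInner A B := by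
  obtain ⟨C, hC⟩ : ∃ C : Matrix (Fin m) (Fin m) ℝ, B = Cᴴ * C := by
    open scoped MatrixOrder in exact CStarAlgebra.nonneg_iff_eq_star_mul_self.mp hB.nonneg
  have hAt : Aᵀ = A := by
    have := hA.isHermitian
    simpa [Matrix.IsHermitian, Matrix.conjTranspose_eq_transpose_of_trivial] using this
  have h1 : tInner A B = (C * A * Cᴴ).trace := by
    rw [tInner, hAt, hC]
    rw [show Cᴴ = Cᵀ from Matrix.conjTranspose_eq_transpose_of_trivial C]
    rw [← Matrix.mul_assoc, Matrix.trace_mul_cycle]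
  rw [h1]
  exact psd_trace_nonneg (hA.mul_mul_conjTranspose_same C)

/-- If `‖S‖₁ > K` for some `K > n/λ`, then `S` is not a minimizer of `L`:
there is `ε ∈ (0,1)` with `L((1-ε)S) < L(S)`. -/
theorem stmt2 {n : ℕ} (lam K : ℝ) (hlam : 0 < lam)
    (Sig : Matrix (Fin n) (Fin n) ℝ) (hSig : Sig.PosSemidef)
    (hK : (n : ℝ) / lam < K)
    (S : Matrix (Fin n) (Fin n) ℝ) (hS : S.PosDef) (hS1 : norm1 S > K) :
    ∃ ε : ℝ, ε ∈ Set.Ioo (0 : ℝ) 1 ∧ Lfun lam Sig ((1 - ε) • S) < Lfun lam Sig S := by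
  set c : ℝ := lam * norm1 S with hc_def
  have hn0 : (0:ℝ) ≤ n := Nat.cast_nonneg n
  have hnc : (n : ℝ) < c := by
    have h1 : (n:ℝ) < lam * K := by rw [mul_comm]; exact (div_lt_iff₀ hlam).mp hK
    have h2 : lam * K < c := by
      rw [hc_def]; exact (mul_lt_mul_iff_right₀ hlam).mpr hS1
    linarith
  have hc0 : 0 < c := lt_of_le_of_lt hn0 hnc
  set ε : ℝ := (1 - n / c) / 2 with hε_def
  have hncc : (n:ℝ)/c < 1 := (div_lt_one hc0).mpr hnc
  have hncc0 : 0 ≤ (n:ℝ)/c := div_nonneg hn0 hc0.le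
  have hε0 : 0 < ε := by rw [hε_def]; linarith
  have hε1 : ε < 1 := by rw [hε_def]; linarith
  have h1ε : 0 < 1 - ε := by linarith
  refine ⟨ε, ⟨hε0, hε1⟩, ?_⟩
  have hT : 0 ≤ tInner Sig S := tInner_nonneg hSig hS.posSemidef
  -- scaling of each piece
  have hI : tInner Sig ((1 - ε) • S) = (1 - ε) * tInner Sig S := by
    simp [tInner, Matrix.mul_smul]
  have hN : norm1 ((1 - ε) • S) = (1 - ε) * norm1 S := by
    simp only [norm1, Matrix.smul_apply, smul_eq_mul, abs_mul, abs_of_pos h1ε,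
      Finset.mul_sum]
  have hdet : ((1 - ε) • S).det = (1 - ε) ^ n * S.det := by
    simp [Matrix.det_smul]
  have hlog : Real.log (((1 - ε) • S).det) = n * Real.log (1 - ε) + Real.log S.det := by
    rw [hdet, Real.log_mul (by positivity) (ne_of_gt hS.det_pos), Real.log_pow]
  -- key log inequality : -log(1-ε) ≤ ε/(1-ε)
  have hlogkey : -Real.log (1 - ε) ≤ ε / (1 - ε) := by
    have := Real.log_le_sub_one_of_pos (x := (1 - ε)⁻¹) (by positivity)
    rw [Real.log_inv] at this
    have h : (1 - ε)⁻¹ - 1 = ε / (1 - ε) := by field_simp; ring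
    linarith [h ▸ this]
  have hmain : (n : ℝ) * (-Real.log (1 - ε)) < ε * c := by
    have h2 : (n:ℝ) * (ε / (1 - ε)) < ε * c := by
      rw [div_eq_mul_inv, ← mul_assoc, mul_comm (n:ℝ) ε, mul_assoc]
      apply mul_lt_mul_of_pos_left _ hε0
      rw [← div_eq_mul_inv, div_lt_iff₀ h1ε]
      have : (1 - ε) * c = (c + n) / 2 := by
        rw [hε_def]; field_simp; ring
      rw [mul_comm c (1 - ε), this]; linarith
    calc (n : ℝ) * (-Real.log (1 - ε)) ≤ (n:ℝ) * (ε / (1 - ε)) :=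
          mul_le_mul_of_nonneg_left hlogkey hn0
      _ < ε * c := h2
  rw [Lfun, Lfun, hI, hN, hlog]
  nlinarith [hT, hε0]
end

section
/- Let λ > 0, Σ ∈ S^n_{+}, and L(S) := ⟨Σ,S⟩ - log(det S) + λ‖S‖₁ on S^n_{++}. For S ∈ S^n_{++} with ‖S‖₁ > K where K > n/λ, and any ε ∈ (0,1) with -n log(1-ε)/ε ≤ λK, one has L(S) - L((1-ε)S) ≥ ελ‖S‖₁ + n log(1-ε) > ελK + n log(1-ε) ≥ 0. -/
open Matrix

lemma trace_nonneg_of_posSemidef {n : ℕ} {M : Matrix (Fin n) (Fin n) ℝ}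
    (hM : M.PosSemidef) : 0 ≤ Matrix.trace M := by
  rw [Matrix.trace]
  refine Finset.sum_nonneg fun i _ => ?_
  have := hM.dotProduct_mulVec_nonneg (Pi.single i 1)
  simpa [Matrix.mulVec, dotProduct, Pi.single_apply] using this

lemma tInner_nonneg_aux {n : ℕ} {A B : Matrix (Fin n) (Fin n) ℝ}
    (hA : A.PosSemidef) (hB : B.PosSemidef) : 0 ≤ Matrix.trace (Aᵀ * B) := by
  obtain ⟨C, hC⟩ : ∃ C : Matrix (Fin n) (Fin n) ℝ, A = Cᴴ * C := by
    open scoped MatrixOrder in exact CStarAlgebra.nonneg_iff_eq_star_mul_self.mp hA.nonneg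
  have hAt : Aᵀ = A := hA.isHermitian
  rw [hAt, hC]
  have : Matrix.trace (Cᴴ * C * B) = Matrix.trace (C * B * Cᴴ) := by
    rw [Matrix.mul_assoc, Matrix.trace_mul_comm]
  rw [this]
  exact trace_nonneg_of_posSemidef (hB.mul_mul_conjTranspose_same C)


/-- For `S` positive definite with `‖S‖₁ > K`, `K > n/λ`, and `ε ∈ (0,1)` with
`-n log(1-ε)/ε ≤ λK`, one has
`L(S) - L((1-ε)S) ≥ ελ‖S‖₁ + n log(1-ε) > ελK + n log(1-ε) ≥ 0`. -/
theorem stmt3 {n : ℕ} (lam K ε : ℝ) (hlam : 0 < lam)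
    (Sig : Matrix (Fin n) (Fin n) ℝ) (hSig : Sig.PosSemidef)
    (hK : (n : ℝ) / lam < K)
    (S : Matrix (Fin n) (Fin n) ℝ) (hS : S.PosDef) (hS1 : norm1 S > K)
    (hε : ε ∈ Set.Ioo (0 : ℝ) 1)
    (hεK : -(n : ℝ) * Real.log (1 - ε) / ε ≤ lam * K) :
    Lfun lam Sig S - Lfun lam Sig ((1 - ε) • S)
        ≥ ε * lam * norm1 S + (n : ℝ) * Real.log (1 - ε) ∧
      ε * lam * norm1 S + (n : ℝ) * Real.log (1 - ε)
        > ε * lam * K + (n : ℝ) * Real.log (1 - ε) ∧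
      ε * lam * K + (n : ℝ) * Real.log (1 - ε) ≥ 0 := by
  obtain ⟨hε0, hε1⟩ := hε
  have h1ε : (0:ℝ) < 1 - ε := by linarith
  have hdet : 0 < S.det := hS.det_pos
  -- scaling identities
  have hsc_tInner : tInner Sig ((1 - ε) • S) = (1 - ε) * tInner Sig S := by
    simp [tInner, Matrix.transpose_smul, Matrix.mul_smul, Matrix.smul_mul]
  have hsc_norm1 : norm1 ((1 - ε) • S) = (1 - ε) * norm1 S := by
    simp [norm1, Matrix.smul_apply, abs_mul, abs_of_pos h1ε, Finset.mul_sum]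
  have hsc_det : Real.log (((1 - ε) • S).det)
      = (n : ℝ) * Real.log (1 - ε) + Real.log S.det := by
    rw [Matrix.det_smul, Real.log_mul (by positivity) (ne_of_gt hdet),
      Real.log_pow]
    simp
  have htr : 0 ≤ tInner Sig S := by
    unfold tInner; exact tInner_nonneg_aux hSig hS.posSemidef
  have hKpos : 0 < K := lt_of_le_of_lt (by positivity) hK
  refine ⟨?_, ?_, ?_⟩
  · have : Lfun lam Sig S - Lfun lam Sig ((1 - ε) • S)
        = ε * tInner Sig S + (n : ℝ) * Real.log (1 - ε) + ε * lam * norm1 S := by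
      simp only [Lfun, hsc_tInner, hsc_norm1, hsc_det]
      ring
    rw [this]
    nlinarith
  · have : 0 < ε * lam := by positivity
    nlinarith
  · have h2 : -(n : ℝ) * Real.log (1 - ε) ≤ ε * (lam * K) := by
      rw [div_le_iff₀ hε0] at hεK
      linarith
    nlinarith
end
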